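/- Let G be a biconnected planar graph that is neither 3-connected nor a cycle. Then G has a 3-connected separating pair, i.e., a separating pair {a,b} such that there are at least three internally vertex-disjoint paths between a and b. -/

import Mathlib

open SimpleGraph

variable {V : Type*}

/-- `{a,b}` is a separating pair: removing both `a` and `b` disconnects the graph. -/
def SepPair (G : SimpleGraph V) (a b : V) : Prop :=
  a ≠ b ∧ ¬ (G.induce {v : V | v ≠ a ∧ v ≠ b}).Connected

/-- Two walks from `a` to `b` are internally vertex-disjoint. -/
def InternallyDisjoint (G : SimpleGraph V) {a b : V} (p q : G.Walk a b) : Prop :=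
  ∀ v : V, v ∈ p.support → v ∈ q.support → v = a ∨ v = b

/-- The pair `(a,b)` is 3-connected: there are at least three pairwise internally
vertex-disjoint paths between `a` and `b`. -/
def ThreeConnPair (G : SimpleGraph V) (a b : V) : Prop :=
  ∃ p q r : G.Path a b, InternallyDisjoint G p.1 q.1 ∧ InternallyDisjoint G p.1 r.1 ∧
    InternallyDisjoint G q.1 r.1

/-- `G` is biconnected: connected, at least 3 vertices, no articulation point. -/
def Biconnected (G : SimpleGraph V) : Prop :=
  G.Connected ∧ 3 ≤ Nat.card V ∧ ∀ v : V, (G.induce {u : V | u ≠ v}).Connected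

/-- `G` is 3-connected: at least 4 vertices and removing any at most 2 vertices
leaves it connected. -/
def ThreeConnectedGraph (G : SimpleGraph V) : Prop :=
  4 ≤ Nat.card V ∧ ∀ s : Set V, s.ncard ≤ 2 → (G.induce sᶜ).Connected

/-- Reversal of darts, as a permutation. -/
def dartRev (G : SimpleGraph V) : Equiv.Perm G.Dart :=
  ⟨SimpleGraph.Dart.symm, SimpleGraph.Dart.symm,
    fun d => SimpleGraph.Dart.symm_symm d, fun d => SimpleGraph.Dart.symm_symm d⟩

/-- A rotation scheme: a permutation of the darts fixing the tail of each dart and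
acting as a single rotation on the darts out of each vertex. -/
def RotationScheme (G : SimpleGraph V) (σ : Equiv.Perm G.Dart) : Prop :=
  (∀ d : G.Dart, (σ d).toProd.1 = d.toProd.1) ∧
    ∀ d e : G.Dart, d.toProd.1 = e.toProd.1 → ∃ n : ℕ, (σ ^ n) d = e

/-- The face-tracing permutation of a rotation scheme. -/
def facePerm (G : SimpleGraph V) (σ : Equiv.Perm G.Dart) : Equiv.Perm G.Dart :=
  (dartRev G).trans σ

/-- The faces of the combinatorial embedding, as a setoid on darts. -/
def faceSetoid (G : SimpleGraph V) (σ : Equiv.Perm G.Dart) : Setoid G.Dart :=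
  ⟨(facePerm G σ).SameCycle,
    ⟨fun x => Equiv.Perm.SameCycle.refl _ x, Equiv.Perm.SameCycle.symm,
      Equiv.Perm.SameCycle.trans⟩⟩

/-- The number of faces of the embedding given by the rotation scheme `σ`. -/
noncomputable def faceCount (G : SimpleGraph V) (σ : Equiv.Perm G.Dart) : ℕ :=
  Nat.card (Quotient (faceSetoid G σ))

/-- `σ` is a planar embedding of `G`: a rotation scheme satisfying Euler's formula. -/
def IsPlanarEmbedding (G : SimpleGraph V) (σ : Equiv.Perm G.Dart) : Prop :=
  RotationScheme G σ ∧
    (Nat.card V : ℤ) - (Nat.card G.edgeSet : ℤ) + (faceCount G σ : ℤ) = 2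

/-- `G` is planar: it admits a planar (combinatorial) embedding. -/
def HasPlanarEmbedding (G : SimpleGraph V) : Prop :=
  ∃ σ : Equiv.Perm G.Dart, IsPlanarEmbedding G σ

/-- A face of the embedding: an orbit of the face-tracing permutation. -/
def IsFace (G : SimpleGraph V) (σ : Equiv.Perm G.Dart) (f : Set G.Dart) : Prop :=
  ∃ d : G.Dart, f = {e : G.Dart | (facePerm G σ).SameCycle d e}

/-- Vertex `v` lies on the boundary of the face `f`. -/
def OnFace {G : SimpleGraph V} (f : Set G.Dart) (v : V) : Prop :=
  ∃ d ∈ f, d.toProd.1 = v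

namespace TCAux

variable {V : Type*} {G : SimpleGraph V}

/-- Reachability within a vertex set `s` (all support vertices in `s`). -/
def Avd (G : SimpleGraph V) (s : Set V) (x y : V) : Prop :=
  ∃ w : G.Walk x y, ∀ v ∈ w.support, v ∈ s

lemma Avd.refl {s : Set V} {x : V} (hx : x ∈ s) : Avd G s x x :=
  ⟨Walk.nil, by simp [hx]⟩

lemma Avd.left_mem {s : Set V} {x y : V} (h : Avd G s x y) : x ∈ s := by
  obtain ⟨w, hw⟩ := h; exact hw _ w.start_mem_support

lemma Avd.right_mem {s : Set V} {x y : V} (h : Avd G s x y) : y ∈ s := by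
  obtain ⟨w, hw⟩ := h; exact hw _ w.end_mem_support

lemma Avd.symm {s : Set V} {x y : V} (h : Avd G s x y) : Avd G s y x := by
  obtain ⟨w, hw⟩ := h
  exact ⟨w.reverse, by intro v hv; rw [Walk.support_reverse, List.mem_reverse] at hv; exact hw v hv⟩

lemma Avd.trans {s : Set V} {x y z : V} (h : Avd G s x y) (h' : Avd G s y z) : Avd G s x z := by
  obtain ⟨w, hw⟩ := h; obtain ⟨w', hw'⟩ := h'
  refine ⟨w.append w', ?_⟩
  intro v hv
  rw [Walk.mem_support_append_iff] at hv
  rcases hv with hv | hv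
  · exact hw v hv
  · exact hw' v hv

lemma Avd.mono {s t : Set V} (hst : s ⊆ t) {x y : V} (h : Avd G s x y) : Avd G t x y := by
  obtain ⟨w, hw⟩ := h; exact ⟨w, fun v hv => hst (hw v hv)⟩

lemma Avd.adj_extend {s : Set V} {x y z : V} (h : Avd G s x y) (hadj : G.Adj y z)
    (hz : z ∈ s) : Avd G s x z := by
  obtain ⟨w, hw⟩ := h
  refine ⟨w.concat hadj, ?_⟩
  intro v hv
  rw [Walk.support_concat, List.mem_append] at hv
  rcases hv with hv | hv
  · exact hw v hv
  · simp at hv; subst hv; exact hz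

/-- From a walk in an induced subgraph, get an `Avd` witness. -/
lemma avd_of_induce_walk {s : Set V} : ∀ {x y : s}, (G.induce s).Walk x y → Avd G s x y := by
  intro x y w
  induction w with
  | nil => exact Avd.refl (Subtype.mem _)
  | @cons u v _ h p ih =>
    have hadj : G.Adj u v := h
    exact Avd.trans ⟨Walk.cons hadj Walk.nil, by
      intro t ht; simp at ht; rcases ht with rfl | rfl; exacts [u.2, v.2]⟩ ih

lemma avd_of_reachable {s : Set V} {x y : s} (h : (G.induce s).Reachable x y) :
    Avd G s (x : V) (y : V) := by
  obtain ⟨w⟩ := h; exact avd_of_induce_walk w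

lemma reachable_of_avd {s : Set V} {x y : V} (h : Avd G s x y) (hx : x ∈ s) (hy : y ∈ s) :
    (G.induce s).Reachable ⟨x, hx⟩ ⟨y, hy⟩ := by
  obtain ⟨w, hw⟩ := h
  induction w with
  | nil => rfl
  | @cons u v z h p ih =>
    have hv : v ∈ s := hw v (by simp)
    have hadj : (G.induce s).Adj ⟨u, hx⟩ ⟨v, hv⟩ := h
    exact hadj.reachable.trans (ih hv hy (fun t ht => hw t (by simp [ht])))

/-- Crossing lemma: a walk from outside `T` into `T` has an edge crossing into `T`. -/
lemma crossing {T : Set V} : ∀ {x y : V} (w : G.Walk x y), x ∉ T → y ∈ T →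
    ∃ u v, G.Adj u v ∧ u ∉ T ∧ v ∈ T ∧ u ∈ w.support ∧ v ∈ w.support := by
  intro x y w
  induction w with
  | nil => intro hx hy; exact absurd hy hx
  | @cons u v z h p ih =>
    intro hx hy
    by_cases hv : v ∈ T
    · exact ⟨u, v, h, hx, hv, by simp, by simp⟩
    · obtain ⟨u', v', h', hu', hv', hus, hvs⟩ := ih hv hy
      exact ⟨u', v', h', hu', hv', by simp [hus], by simp [hvs]⟩

/-- First hit of a set along a walk. -/
lemma firstHit {T : Set V} : ∀ {x y : V} (w : G.Walk x y), x ∉ T → y ∈ T →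
    ∃ u, u ∈ T ∧ ∃ q : G.Walk x u, (∀ v ∈ q.support, v ∈ T → v = u) ∧
      (∀ v ∈ q.support, v ∈ w.support) := by
  intro x y w
  induction w with
  | nil => intro hx hy; exact absurd hy hx
  | @cons u v z h p ih =>
    intro hx hy
    by_cases hv : v ∈ T
    · refine ⟨v, hv, Walk.cons h Walk.nil, ?_, ?_⟩
      · intro t ht htT; simp at ht; rcases ht with rfl | rfl
        · exact absurd htT hx
        · rfl
      · intro t ht; simp at ht; rcases ht with rfl | rfl <;> simp
    · obtain ⟨u', hu', q, hq1, hq2⟩ := ih hv hy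
      refine ⟨u', hu', Walk.cons h q, ?_, ?_⟩
      · intro t ht htT
        rw [Walk.support_cons, List.mem_cons] at ht
        rcases ht with rfl | ht
        · exact absurd htT hx
        · exact hq1 t ht htT
      · intro t ht
        rw [Walk.support_cons, List.mem_cons] at ht
        rcases ht with rfl | ht
        · simp
        · simp [hq2 t ht]

/-- A walk starting in a set `P` closed up to `{a,b}`, avoiding `a` and `b`, stays in `P`. -/
lemma closedWalk {P : Set V} {a b : V}
    (hcl : ∀ x ∈ P, ∀ y, G.Adj x y → y ∉ P → y = a ∨ y = b) :
    ∀ {x z : V} (w : G.Walk x z), x ∈ P → (∀ v ∈ w.support, v ≠ a ∧ v ≠ b) →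
      ∀ v ∈ w.support, v ∈ P := by
  intro x z w
  induction w with
  | nil => intro hx _ v hv; simp at hv; subst hv; exact hx
  | @cons u v z h p ih =>
    intro hx hav t ht
    have hvP : v ∈ P := by
      by_contra hvP
      rcases hcl u hx v h hvP with rfl | rfl
      · exact (hav v (by simp)).1 rfl
      · exact (hav v (by simp)).2 rfl
    rw [Walk.support_cons, List.mem_cons] at ht
    rcases ht with rfl | ht
    · exact hx
    · exact ih hvP (fun s hs => hav s (by simp [hs])) t ht

/-- The endpoint of a path is not in a proper `takeUntil`. -/
lemma endNotInTake [DecidableEq V] {a x b : V} {p : G.Walk a x} (hp : p.IsPath)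
    (hb : b ∈ p.support) (hbx : b ≠ x) : x ∉ (p.takeUntil b hb).support := by
  intro hxin
  have hspec := p.take_spec hb
  have hnd := hp.support_nodup
  rw [← hspec, Walk.support_append] at hnd
  have hxdrop : x ∈ (p.dropUntil b hb).support := Walk.end_mem_support _
  have hxtail : x ∈ (p.dropUntil b hb).support.tail := by
    have := Walk.support_eq_cons (p.dropUntil b hb)
    rw [this] at hxdrop
    rcases List.mem_cons.mp hxdrop with rfl | h
    · exact absurd rfl hbx
    · exact h
  exact (List.disjoint_of_nodup_append hnd) hxin hxtail

/-- If `a` and `b` are adjacent, the pair is trivially 3-connected (the edge path used thrice). -/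
lemma cheese {a b : V} (h : G.Adj a b) : ThreeConnPair G a b := by
  have hp : (Walk.cons h Walk.nil : G.Walk a b).IsPath := by
    simp [Walk.isPath_def, h.ne]
  refine ⟨⟨_, hp⟩, ⟨_, hp⟩, ⟨_, hp⟩, ?_, ?_, ?_⟩ <;>
  · intro v hv _
    simp at hv
    tauto

end TCAux

namespace TCAux

variable {V : Type*} {G : SimpleGraph V}

/-- A connected component of `G` minus `{a,b}`, abstractly. -/
def IsPart (G : SimpleGraph V) (a b : V) (C : Set V) : Prop :=
  C.Nonempty ∧ (∀ v ∈ C, v ≠ a ∧ v ≠ b) ∧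
    (∀ x ∈ C, ∀ y, G.Adj x y → y ∉ C → y = a ∨ y = b) ∧
    (∀ x ∈ C, ∀ y ∈ C, Avd G C x y)

lemma IsPart.symmPair {a b : V} {C : Set V} (h : IsPart G a b C) : IsPart G b a C := by
  obtain ⟨h1, h2, h3, h4⟩ := h
  exact ⟨h1, fun v hv => ⟨(h2 v hv).2, (h2 v hv).1⟩,
    fun x hx y hy hn => (h3 x hx y hy hn).symm, h4⟩

/-- The component of `x` in `G` minus `{a,b}`. -/
def cmp (G : SimpleGraph V) (a b x : V) : Set V :=
  {y | (y ≠ a ∧ y ≠ b) ∧ Avd G {v : V | v ≠ a ∧ v ≠ b} x y}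

lemma mem_cmp_self {a b x : V} (hx : x ≠ a ∧ x ≠ b) : x ∈ cmp G a b x :=
  ⟨hx, Avd.refl hx⟩

lemma avd_all_support [DecidableEq V] {s : Set V} {x y : V} (w : G.Walk x y)
    (hw : ∀ v ∈ w.support, v ∈ s) : ∀ t ∈ w.support, Avd G s x t := by
  intro t ht
  exact ⟨w.takeUntil t ht, fun v hv => hw v (w.support_takeUntil_subset ht hv)⟩

lemma cmp_isPart [DecidableEq V] {a b x : V} (hx : x ≠ a ∧ x ≠ b) :
    IsPart G a b (cmp G a b x) := by
  have hmem : x ∈ cmp G a b x := mem_cmp_self hx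
  refine ⟨⟨x, hmem⟩, fun v hv => hv.1, ?_, ?_⟩
  · intro u hu y hadj hy
    by_contra hab
    push_neg at hab
    exact hy ⟨hab, hu.2.adj_extend hadj hab⟩
  · intro u hu w hw
    have key : ∀ t ∈ cmp G a b x, Avd G (cmp G a b x) x t := by
      intro t ht
      obtain ⟨w', hw'⟩ := ht.2
      exact ⟨w', fun v hv => ⟨hw' v hv, avd_all_support w' hw' v hv⟩⟩
    exact (key u hu).symm.trans (key w hw)

lemma part_subset {a b : V} {P Q : Set V} (h1 : IsPart G a b P) (h2 : IsPart G a b Q)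
    {v : V} (hvP : v ∈ P) (hvQ : v ∈ Q) : P ⊆ Q := by
  intro t ht
  obtain ⟨w, hw⟩ := h1.2.2.2 v hvP t ht
  exact closedWalk h2.2.2.1 w hvQ (fun s hs => h1.2.1 s (hw s hs)) t w.end_mem_support

lemma part_eq {a b : V} {P Q : Set V} (h1 : IsPart G a b P) (h2 : IsPart G a b Q)
    {v : V} (hvP : v ∈ P) (hvQ : v ∈ Q) : P = Q :=
  Set.Subset.antisymm (part_subset h1 h2 hvP hvQ) (part_subset h2 h1 hvQ hvP)

lemma touch_a {a b : V} {C : Set V}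
    (hnocut : ∀ v : V, (G.induce {u : V | u ≠ v}).Connected)
    (hab : a ≠ b) (hP : IsPart G a b C) : ∃ u ∈ C, G.Adj a u := by
  obtain ⟨z, hz⟩ := hP.1
  have haC : a ∉ C := fun h => (hP.2.1 a h).1 rfl
  have hreach : Avd G {u : V | u ≠ b} a z :=
    avd_of_reachable (((hnocut b).preconnected) ⟨a, hab⟩ ⟨z, (hP.2.1 z hz).2⟩)
  obtain ⟨w, hw⟩ := hreach
  obtain ⟨u, v, hadj, hu, hv, hus, _⟩ := crossing w haC hz
  rcases hP.2.2.1 v hv u hadj.symm hu with rfl | rfl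
  · exact ⟨v, hv, hadj⟩
  · exact absurd (hw u hus) (by simp)

lemma touch_b {a b : V} {C : Set V}
    (hnocut : ∀ v : V, (G.induce {u : V | u ≠ v}).Connected)
    (hab : a ≠ b) (hP : IsPart G a b C) : ∃ u ∈ C, G.Adj b u :=
  touch_a hnocut hab.symm hP.symmPair

/-- A path from `a` to `b` whose support lies in `C ∪ {a,b}`. -/
lemma partPath [DecidableEq V] {a b : V} {C : Set V}
    (hnocut : ∀ v : V, (G.induce {u : V | u ≠ v}).Connected)
    (hab : a ≠ b) (hP : IsPart G a b C) :
    ∃ p : G.Path a b, ∀ v ∈ p.1.support, v ∈ C ∨ v = a ∨ v = b := by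
  obtain ⟨u, hu, hau⟩ := touch_a hnocut hab hP
  obtain ⟨t, ht, hbt⟩ := touch_b hnocut hab hP
  obtain ⟨q, hq⟩ := hP.2.2.2 u hu t ht
  refine ⟨⟨(Walk.cons hau (q.concat hbt.symm)).bypass, Walk.bypass_isPath _⟩, ?_⟩
  intro v hv
  have hv' := (Walk.cons hau (q.concat hbt.symm)).support_bypass_subset hv
  rw [Walk.support_cons, List.mem_cons] at hv'
  rcases hv' with rfl | hv'
  · exact Or.inr (Or.inl rfl)
  · rw [Walk.support_concat, List.mem_append] at hv'
    rcases hv' with hv' | hv'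
    · exact Or.inl (hq v hv')
    · simp at hv'; exact Or.inr (Or.inr hv')

/-- Three pairwise disjoint parts give a 3-connected pair. -/
lemma threeParts [DecidableEq V] {a b : V} {P1 P2 P3 : Set V}
    (hnocut : ∀ v : V, (G.induce {u : V | u ≠ v}).Connected)
    (hab : a ≠ b) (h1 : IsPart G a b P1) (h2 : IsPart G a b P2) (h3 : IsPart G a b P3)
    (h12 : Disjoint P1 P2) (h13 : Disjoint P1 P3) (h23 : Disjoint P2 P3) :
    ThreeConnPair G a b := by
  obtain ⟨p1, hp1⟩ := partPath hnocut hab h1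
  obtain ⟨p2, hp2⟩ := partPath hnocut hab h2
  obtain ⟨p3, hp3⟩ := partPath hnocut hab h3
  have key : ∀ {Q R : Set V}, Disjoint Q R →
      ∀ {q r : G.Path a b}, (∀ v ∈ q.1.support, v ∈ Q ∨ v = a ∨ v = b) →
      (∀ v ∈ r.1.support, v ∈ R ∨ v = a ∨ v = b) → InternallyDisjoint G q.1 r.1 := by
    intro Q R hQR q r hq hr v hvq hvr
    rcases hq v hvq with hvQ | h | h
    · rcases hr v hvr with hvR | h | h
      · exact absurd (Set.mem_inter hvQ hvR) (by rw [Set.disjoint_iff_inter_eq_empty.mp hQR]; simp)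
      · exact Or.inl h
      · exact Or.inr h
    · exact Or.inl h
    · exact Or.inr h
  exact ⟨p1, p2, p3, key h12 hp1 hp2, key h13 hp1 hp3, key h23 hp2 hp3⟩

/-- Build a separating pair from a non-`Avd` witness. -/
lemma sep_of_not_avd {a b x y : V} (hab : a ≠ b) (hx : x ≠ a ∧ x ≠ b) (hy : y ≠ a ∧ y ≠ b)
    (h : ¬ Avd G {v : V | v ≠ a ∧ v ≠ b} x y) : SepPair G a b := by
  refine ⟨hab, fun hconn => h ?_⟩
  exact avd_of_reachable (hconn.preconnected ⟨x, hx⟩ ⟨y, hy⟩)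

lemma not_avd_of_sep {a b : V} (hne : ∃ v : V, v ≠ a ∧ v ≠ b) (hsep : SepPair G a b) :
    ∃ x y : V, (x ≠ a ∧ x ≠ b) ∧ (y ≠ a ∧ y ≠ b) ∧ ¬ Avd G {v : V | v ≠ a ∧ v ≠ b} x y := by
  by_contra hall
  push_neg at hall
  obtain ⟨v0, hv0⟩ := hne
  haveI : Nonempty {v : V | v ≠ a ∧ v ≠ b} := ⟨⟨v0, hv0⟩⟩
  refine hsep.2 (Connected.mk ?_)
  rintro ⟨x, hx⟩ ⟨y, hy⟩
  exact reachable_of_avd (hall x y hx hy) hx hy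

end TCAux

namespace TCAux

variable {V : Type*} {G : SimpleGraph V}

lemma IDsymm {a b : V} {p q : G.Walk a b} (h : InternallyDisjoint G p q) :
    InternallyDisjoint G q p := fun v hv hv' => h v hv' hv

def singletonPath {a b : V} (h : G.Adj a b) : G.Path a b :=
  ⟨Walk.cons h Walk.nil, by simp [Walk.isPath_def, h.ne]⟩

lemma whitCombine [DecidableEq V] {S : Set V} {a x b y : V}
    (P1 P2 : G.Path a x) (hID : InternallyDisjoint G P1.1 P2.1)
    (hS1 : ∀ v ∈ P1.1.support, v ∈ S) (hS2 : ∀ v ∈ P2.1.support, v ∈ S)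
    (hxb : G.Adj x b) (hbS : b ∈ S) (hbx : b ≠ x)
    (hyP1 : y ∈ P1.1.support) (hyx : y ≠ x)
    (Qs : G.Walk y b)
    (hQT : ∀ v ∈ Qs.support, (v ∈ P1.1.support ∨ v ∈ P2.1.support) → v = y)
    (hQS : ∀ v ∈ Qs.support, v ∈ S)
    (hbP2 : b ∉ P2.1.support) :
    ∃ p q : G.Path a b, (∀ v ∈ p.1.support, v ∈ S) ∧ (∀ v ∈ q.1.support, v ∈ S) ∧
      InternallyDisjoint G p.1 q.1 := by
  have hxtake : x ∉ (P1.1.takeUntil y hyP1).support := endNotInTake P1.2 hyP1 hyx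
  refine ⟨⟨((P1.1.takeUntil y hyP1).append Qs).bypass, Walk.bypass_isPath _⟩,
    ⟨(P2.1.concat hxb).bypass, Walk.bypass_isPath _⟩, ?_, ?_, ?_⟩
  · intro v hv
    have := Walk.support_bypass_subset _ hv
    rw [Walk.mem_support_append_iff] at this
    rcases this with h | h
    · exact hS1 v (P1.1.support_takeUntil_subset hyP1 h)
    · exact hQS v h
  · intro v hv
    have := Walk.support_bypass_subset _ hv
    rw [Walk.support_concat, List.mem_append] at this
    rcases this with h | h
    · exact hS2 v h
    · simp at h; subst h; exact hbS
  · intro v hv1 hv2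
    have hv2' := Walk.support_bypass_subset _ hv2
    rw [Walk.support_concat, List.mem_append] at hv2'
    rcases hv2' with hvP2 | hvb
    · have hv1' := Walk.support_bypass_subset _ hv1
      rw [Walk.mem_support_append_iff] at hv1'
      rcases hv1' with htake | hQs
      · rcases hID v (P1.1.support_takeUntil_subset hyP1 htake) hvP2 with h | rfl
        · exact Or.inl h
        · exact absurd htake hxtake
      · have hvy : v = y := hQT v hQs (Or.inr hvP2)
        subst hvy
        rcases hID v hyP1 hvP2 with h | h
        · exact Or.inl h
        · exact absurd h hyx
    · simp at hvb; exact Or.inr hvb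

lemma whitney [DecidableEq V] {S : Set V}
    (hS : ∀ c : V, ∀ x ∈ S \ {c}, ∀ y ∈ S \ {c}, Avd G (S \ {c}) x y) :
    ∀ n : ℕ, ∀ a b : V, a ≠ b →
      (∃ w : G.Walk a b, (∀ v ∈ w.support, v ∈ S) ∧ w.length ≤ n) →
      ∃ p q : G.Path a b, (∀ v ∈ p.1.support, v ∈ S) ∧ (∀ v ∈ q.1.support, v ∈ S) ∧
        InternallyDisjoint G p.1 q.1 := by
  intro n
  induction n with
  | zero =>
    intro a b hab ⟨w, _, hlen⟩
    exact absurd (w.eq_of_length_eq_zero (Nat.le_zero.mp hlen)) hab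
  | succ n ih =>
    intro a b hab ⟨w, hwS, hlen⟩
    have haS : a ∈ S := hwS a w.start_mem_support
    have hbS : b ∈ S := hwS b w.end_mem_support
    by_cases hadj : G.Adj a b
    · refine ⟨singletonPath hadj, singletonPath hadj, ?_, ?_, ?_⟩
      · intro v hv; simp [singletonPath] at hv; rcases hv with rfl | rfl <;> assumption
      · intro v hv; simp [singletonPath] at hv; rcases hv with rfl | rfl <;> assumption
      · intro v hv _; simp [singletonPath] at hv; tauto
    · -- take a path, decompose off the last edge
      set w' := w.bypass with hw'def
      have hw'path : w'.IsPath := w.bypass_isPath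
      have hw'S : ∀ v ∈ w'.support, v ∈ S := fun v hv => hwS v (w.support_bypass_subset hv)
      have hw'len : w'.length ≤ n + 1 := le_trans w.length_bypass_le hlen
      cases hrev : w'.reverse with
      | nil => exact absurd rfl hab
      | @cons _ x _ h q =>
        -- h : G.Adj b x, q : Walk x a
        have hxb : G.Adj x b := h.symm
        have hbx : b ≠ x := h.ne
        have hax : a ≠ x := by
          rintro rfl
          exact hadj h.symm
        have hqsup : ∀ v ∈ q.support, v ∈ S := by
          intro v hv
          apply hw'S
          have : v ∈ w'.reverse.support := by rw [hrev, Walk.support_cons]; simp [hv]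
          rwa [Walk.support_reverse, List.mem_reverse] at this
        have hqlen : q.length ≤ n := by
          have : w'.reverse.length = q.length + 1 := by rw [hrev, Walk.length_cons]
          rw [Walk.length_reverse] at this
          omega
        have hbq : b ∉ q.support := by
          intro hbq
          have hnd : w'.reverse.support.Nodup := by
            rw [Walk.support_reverse]
            exact (List.nodup_reverse).mpr hw'path.support_nodup
          rw [hrev, Walk.support_cons] at hnd
          exact (List.nodup_cons.mp hnd).1 hbq
        obtain ⟨P1, P2, hP1S, hP2S, hID⟩ := ih a x hax ⟨q.reverse, by
          intro v hv; rw [Walk.support_reverse, List.mem_reverse] at hv; exact hqsup v hv,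
          by rwa [Walk.length_reverse]⟩
        have hbP1orNot : ∀ (A B : G.Path a x), InternallyDisjoint G A.1 B.1 →
            (∀ v ∈ A.1.support, v ∈ S) → (∀ v ∈ B.1.support, v ∈ S) →
            b ∈ A.1.support → ∃ p q : G.Path a b, (∀ v ∈ p.1.support, v ∈ S) ∧
              (∀ v ∈ q.1.support, v ∈ S) ∧ InternallyDisjoint G p.1 q.1 := by
          intro A B hIDab hAS hBS hbA
          have hbB : b ∉ B.1.support := by
            intro hbB
            rcases hIDab b hbA hbB with rfl | rfl
            · exact hab rfl
            · exact hbx rfl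
          exact whitCombine A B hIDab hAS hBS hxb hbS hbx hbA hbx Walk.nil
            (by intro v hv _; simpa using hv) (by intro v hv; simp at hv; subst hv; exact hbS) hbB
        by_cases hb1 : b ∈ P1.1.support
        · exact hbP1orNot P1 P2 hID hP1S hP2S hb1
        by_cases hb2 : b ∈ P2.1.support
        · exact hbP1orNot P2 P1 (IDsymm hID) hP2S hP1S hb2
        -- main case: find the last exit point of an a-b walk avoiding x
        obtain ⟨Q, hQ⟩ := hS x a ⟨haS, hax⟩ b ⟨hbS, hbx⟩
        set T : Set V := {v | v ∈ P1.1.support ∨ v ∈ P2.1.support} with hT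
        have hbT : b ∉ T := by rintro (h | h) <;> [exact hb1 h; exact hb2 h]
        have haT : a ∈ T := Or.inl P1.1.start_mem_support
        obtain ⟨y, hyT, q0, hq0T, hq0sub⟩ := firstHit Q.reverse hbT haT
        have hq0S : ∀ v ∈ q0.support, v ∈ S \ {x} := by
          intro v hv
          have := hq0sub v hv
          rw [Walk.support_reverse, List.mem_reverse] at this
          exact hQ v this
        have hyx : y ≠ x := by
          have := hq0S y q0.end_mem_support
          simpa using this.2
        have hQsT : ∀ v ∈ q0.reverse.support, (v ∈ P1.1.support ∨ v ∈ P2.1.support) → v = y := by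
          intro v hv hvT
          rw [Walk.support_reverse, List.mem_reverse] at hv
          exact hq0T v hv hvT
        have hQsS : ∀ v ∈ q0.reverse.support, v ∈ S := by
          intro v hv
          rw [Walk.support_reverse, List.mem_reverse] at hv
          exact (hq0S v hv).1
        rcases hyT with hy1 | hy2
        · exact whitCombine P1 P2 hID hP1S hP2S hxb hbS hbx hy1 hyx q0.reverse hQsT hQsS hb2
        · exact whitCombine P2 P1 (IDsymm hID) hP2S hP1S hxb hbS hbx hy2 hyx q0.reverse
            (fun v hv hvT => hQsT v hv hvT.symm) hQsS hb1

end TCAux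

namespace TCAux

variable {V : Type*} {G : SimpleGraph V}

/-- The set of vertices reachable from `a` within `S`. -/
def reachSet (G : SimpleGraph V) (S : Set V) (a : V) : Set V :=
  {u | u ∈ S ∧ Avd G S a u}

/-- Every vertex of `(C ∪ {a,b}) \ {c}` reaches `a` or `b` there. -/
lemma reachAorB [DecidableEq V] {a b c v : V} {C : Set V}
    (hnocut : ∀ t : V, (G.induce {u : V | u ≠ t}).Connected)
    (hab : a ≠ b) (hP : IsPart G a b C)
    (hv : v ∈ (C ∪ {a, b} : Set V) \ {c}) :
    Avd G ((C ∪ {a, b}) \ {c}) v a ∨ Avd G ((C ∪ {a, b}) \ {c}) v b := by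
  set S' : Set V := (C ∪ {a, b}) \ {c} with hS'
  have hvc : v ≠ c := by
    intro h; exact hv.2 (by simp [h])
  by_cases hva : v = a
  · subst hva; exact Or.inl (Avd.refl hv)
  by_cases hvb : v = b
  · subst hvb; exact Or.inr (Avd.refl hv)
  have hvC : v ∈ C := by
    rcases hv.1 with h | h
    · exact h
    · simp at h; tauto
  set Z : Set V := {u | u ∈ S' ∧ Avd G S' v u} with hZ
  by_cases haZ : a ∈ Z
  · exact Or.inl haZ.2
  by_cases hbZ : b ∈ Z
  · exact Or.inr hbZ.2
  exfalso
  have hZcl : ∀ z ∈ Z, ∀ y, G.Adj z y → y ∉ Z → y = c := by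
    intro z hz y hadj hyZ
    have hza : z ≠ a := by rintro rfl; exact haZ hz
    have hzb : z ≠ b := by rintro rfl; exact hbZ hz
    have hzC : z ∈ C := by
      rcases hz.1.1 with h | h
      · exact h
      · simp at h; tauto
    by_contra hyc
    have hyS : y ∈ S' := by
      refine ⟨?_, by simpa using hyc⟩
      by_cases hyC : y ∈ C
      · exact Or.inl hyC
      · rcases hP.2.2.1 z hzC y hadj hyC with rfl | rfl <;> simp
    exact hyZ ⟨hyS, hz.2.adj_extend hadj hyS⟩
  -- pick a target outside Z, distinct from c
  obtain ⟨t, htZ, htc⟩ : ∃ t, t ∉ Z ∧ t ≠ c := by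
    by_cases hac : a = c
    · exact ⟨b, hbZ, fun h => hab (hac.trans h.symm)⟩
    · exact ⟨a, haZ, hac⟩
  have hvZ : v ∈ Z := ⟨hv, Avd.refl hv⟩
  have hreach : Avd G {u : V | u ≠ c} t v :=
    avd_of_reachable (((hnocut c).preconnected) ⟨t, htc⟩ ⟨v, hvc⟩)
  obtain ⟨wk, hwk⟩ := hreach
  obtain ⟨u', v', hadj, hu', hv', hus, _⟩ := crossing wk htZ hvZ
  exact (hwk u' hus) (hZcl v' hv' u' hadj.symm hu')

/-- The structure of one side of a separating pair. -/
def SideProp (G : SimpleGraph V) (a b : V) (C : Set V) : Prop :=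
  (∀ v ∈ C, ∃ u w : V, u ≠ w ∧ G.neighborSet v = {u, w}) ∧
  (∃ u ∈ C, G.neighborSet a ∩ C = {u}) ∧
  (∃ u ∈ C, G.neighborSet b ∩ C = {u})

lemma oneSide [Fintype V] [DecidableEq V] {n : ℕ} {a b c : V} {C S' : Set V}
    (hnocut : ∀ t : V, (G.induce {u : V | u ≠ t}).Connected)
    (hcon : ¬ ∃ x y : V, SepPair G x y ∧ ThreeConnPair G x y)
    (ih : ∀ a b : V, ∀ C : Set V, SepPair G a b → IsPart G a b C → C.ncard ≤ n →
      SideProp G a b C)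
    (hab : a ≠ b) (hP : IsPart G a b C) (hcC : c ∈ C)
    (hS' : S' = (C ∪ {a, b}) \ {c})
    (hnavd : ¬ Avd G S' a b)
    (hcard : C.ncard ≤ n + 1) :
    (∃ u ∈ C, G.neighborSet a ∩ C = {u}) ∧
    (∀ v ∈ reachSet G S' a \ {a}, ∃ u w : V, u ≠ w ∧ G.neighborSet v = {u, w}) ∧
    (∃ z ∈ (reachSet G S' a \ {a}) ∪ {a},
      G.neighborSet c ∩ ((reachSet G S' a \ {a}) ∪ {a}) = {z}) := by
  have hca : c ≠ a := (hP.2.1 c hcC).1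
  have hcb : c ≠ b := (hP.2.1 c hcC).2
  have hmemS' : ∀ t : V, t ∈ S' ↔ (t ∈ C ∨ t = a ∨ t = b) ∧ t ≠ c := by
    intro t
    rw [hS']
    constructor
    · rintro ⟨h1, h2⟩
      refine ⟨?_, by simpa using h2⟩
      rcases h1 with h | h
      · exact Or.inl h
      · simp at h; tauto
    · rintro ⟨h1, h2⟩
      refine ⟨?_, by simpa using h2⟩
      rcases h1 with h | h | h
      · exact Or.inl h
      · exact Or.inr (by simp [h])
      · exact Or.inr (by simp [h])
  have haS' : a ∈ S' := (hmemS' a).mpr ⟨Or.inr (Or.inl rfl), fun h => hca h.symm⟩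
  set X' : Set V := reachSet G S' a \ {a} with hX'
  -- X' is inside C
  have hX'C : X' ⊆ C := by
    rintro t ⟨⟨htS, htAvd⟩, hta⟩
    simp only [Set.mem_singleton_iff] at hta
    have htb : t ≠ b := by rintro rfl; exact hnavd htAvd
    rcases ((hmemS' t).mp htS).1 with h | h | h
    · exact h
    · exact absurd h hta
    · exact absurd h htb
  have hXC : ∀ t ∈ X', t ≠ c := fun t ht => ((hmemS' t).mp ht.1.1).2
  -- closure of X' up to {a, c}
  have f2 : ∀ u ∈ X', ∀ y, G.Adj u y → y ∉ X' → y = a ∨ y = c := by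
    rintro u hu y hadj hyX'
    have huC : u ∈ C := hX'C hu
    by_contra hcon'
    push_neg at hcon'
    obtain ⟨hya, hyc⟩ := hcon'
    have hins : y ∈ S' → False := by
      intro hyS
      exact hyX' ⟨⟨hyS, hu.1.2.adj_extend hadj hyS⟩, by simp [hya]⟩
    by_cases hyC : y ∈ C
    · exact hins ((hmemS' y).mpr ⟨Or.inl hyC, hyc⟩)
    · rcases hP.2.2.1 u huC y hadj hyC with h | h
      · exact hya h
      · subst h
        have hyS : y ∈ S' := (hmemS' y).mpr ⟨Or.inr (Or.inr rfl), hyc⟩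
        exact hnavd (hu.1.2.adj_extend hadj hyS)
  rcases Set.eq_empty_or_nonempty X' with hX'emp | ⟨x', hx'⟩
  · -- a attaches only to c
    have hsub : G.neighborSet a ∩ C ⊆ {c} := by
      rintro y ⟨hadj, hyC⟩
      by_contra hyc
      simp only [Set.mem_singleton_iff] at hyc
      have hyS : y ∈ S' := (hmemS' y).mpr ⟨Or.inl hyC, hyc⟩
      have : y ∈ X' := ⟨⟨hyS, (Avd.refl haS').adj_extend hadj hyS⟩,
        by simp [(hP.2.1 y hyC).1]⟩
      rw [hX'emp] at this
      exact this
    obtain ⟨u, huC, hadjau⟩ := touch_a hnocut hab hP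
    have hac : G.Adj a c := by
      have : u ∈ ({c} : Set V) := hsub ⟨hadjau, huC⟩
      simp at this
      exact this ▸ hadjau
    refine ⟨⟨c, hcC, Set.Subset.antisymm hsub ?_⟩, ?_, ?_⟩
    · intro t ht; simp at ht; subst ht; exact ⟨hac, hcC⟩
    · intro v hv; rw [hX'emp] at hv; exact absurd hv (by simp)
    · refine ⟨a, by simp, ?_⟩
      rw [hX'emp]
      ext t
      simp only [Set.mem_inter_iff, Set.mem_union, Set.mem_singleton_iff]
      constructor
      · rintro ⟨_, h⟩
        simp at h
        exact h
      · rintro rfl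
        exact ⟨hac.symm, by simp⟩
  · -- X' is nonempty
    have hx'S : x' ∈ S' := hx'.1.1
    have hx'a : x' ≠ a := by simpa using hx'.2
    have hx'c : x' ≠ c := hXC x' hx'
    have hnoXb : ∀ z ∈ X', ¬ Avd G {v : V | v ≠ a ∧ v ≠ c} z b := by
      rintro z hz ⟨w, hw⟩
      have hbX' : b ∈ X' := closedWalk f2 w hz (fun v hv => hw v hv) b w.end_mem_support
      have : b ∈ C := hX'C hbX'
      exact (hP.2.1 b this).2 rfl
    have hsep_ac : SepPair G a c :=
      sep_of_not_avd (fun h => hca h.symm) ⟨hx'a, hx'c⟩ ⟨hab.symm, fun h => hcb h.symm⟩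
        (hnoXb x' hx')
    have hnadj_ac : ¬ G.Adj a c := fun h => hcon ⟨a, c, hsep_ac, cheese h⟩
    by_cases hsplit : ∀ u ∈ X', ∀ w ∈ X', Avd G {v : V | v ≠ a ∧ v ≠ c} u w
    · -- X' is a single part for the pair (a,c)
      have hXeq : X' = cmp G a c x' := by
        ext t
        constructor
        · intro ht
          exact ⟨⟨by simpa using ht.2, hXC t ht⟩, hsplit x' hx' t ht⟩
        · rintro ⟨_, havd⟩
          obtain ⟨w, hw⟩ := havd
          exact closedWalk f2 w hx' (fun v hv => hw v hv) t w.end_mem_support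
      have hpart_X : IsPart G a c X' := by rw [hXeq]; exact cmp_isPart ⟨hx'a, hx'c⟩
      have hcard' : X'.ncard ≤ n := by
        have hss : X' ⊂ C := ⟨hX'C, fun hsub => (hXC c (hsub hcC)) rfl⟩
        have := Set.ncard_lt_ncard hss C.toFinite
        omega
      obtain ⟨hint, ⟨u, huX, hua⟩, ⟨z, hzX, hzc⟩⟩ := ih a c X' hsep_ac hpart_X hcard'
      have huadj : G.Adj a u ∧ u ∈ X' := by
        have : u ∈ G.neighborSet a ∩ X' := by rw [hua]; simp
        exact ⟨this.1, this.2⟩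
      refine ⟨⟨u, hX'C huX, ?_⟩, hint, ?_⟩
      · ext t
        constructor
        · rintro ⟨hadj, htC⟩
          have htc : t ≠ c := by rintro rfl; exact hnadj_ac hadj
          have htS : t ∈ S' := (hmemS' t).mpr ⟨Or.inl htC, htc⟩
          have htX : t ∈ X' := ⟨⟨htS, (Avd.refl haS').adj_extend hadj htS⟩,
            by simp [(hP.2.1 t htC).1]⟩
          rw [← hua]
          exact ⟨hadj, htX⟩
        · intro ht
          simp only [Set.mem_singleton_iff] at ht
          subst ht
          exact ⟨huadj.1, hX'C huX⟩
      · refine ⟨z, Or.inl hzX, ?_⟩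
        ext t
        constructor
        · rintro ⟨hadj, htX⟩
          rcases htX with htX | hta
          · rw [← hzc]; exact ⟨hadj, htX⟩
          · simp only [Set.mem_singleton_iff] at hta
            subst hta
            exact absurd hadj.symm hnadj_ac
        · intro ht
          simp only [Set.mem_singleton_iff] at ht
          subst ht
          have : t ∈ G.neighborSet c ∩ X' := by rw [hzc]; simp
          exact ⟨this.1, Or.inl this.2⟩
    · -- two components inside X' : three parts for (a,c)
      exfalso
      push_neg at hsplit
      obtain ⟨u, hu, w, hw, hnavd2⟩ := hsplit
      have hmemu : u ≠ a ∧ u ≠ c := ⟨by simpa using hu.2, hXC u hu⟩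
      have hmemw : w ≠ a ∧ w ≠ c := ⟨by simpa using hw.2, hXC w hw⟩
      have hmemb : b ≠ a ∧ b ≠ c := ⟨hab.symm, fun h => hcb h.symm⟩
      have hsubX : ∀ z ∈ X', cmp G a c z ⊆ X' := by
        intro z hz t ht
        obtain ⟨w', hw'⟩ := ht.2
        exact closedWalk f2 w' hz (fun v hv => hw' v hv) t w'.end_mem_support
      have d12 : Disjoint (cmp G a c u) (cmp G a c w) := by
        rw [Set.disjoint_left]
        intro t ht1 ht2
        have heq := part_eq (cmp_isPart (G := G) hmemu) (cmp_isPart hmemw) ht1 ht2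
        have : w ∈ cmp G a c u := heq ▸ mem_cmp_self hmemw
        exact hnavd2 this.2
      have hbnot : ∀ z, ∀ hz : z ∈ X', Disjoint (cmp G a c z) (cmp G a c b) := by
        intro z hz
        rw [Set.disjoint_left]
        intro t ht1 ht2
        have heq := part_eq (cmp_isPart (G := G) (a := a) (b := c) (x := z)
          ⟨by simpa using hz.2, hXC z hz⟩) (cmp_isPart hmemb) ht1 ht2
        have : b ∈ cmp G a c z := heq ▸ mem_cmp_self hmemb
        have hbX : b ∈ X' := hsubX z hz this
        exact (hP.2.1 b (hX'C hbX)).2 rfl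
      exact hcon ⟨a, c, hsep_ac,
        threeParts hnocut (fun h => hca h.symm)
          (cmp_isPart hmemu) (cmp_isPart hmemw) (cmp_isPart hmemb)
          d12 (hbnot u hu) (hbnot w hw)⟩

end TCAux

namespace TCAux

variable {V : Type*} {G : SimpleGraph V}

lemma mainLemma [Fintype V] [DecidableEq V]
    (hnocut : ∀ t : V, (G.induce {u : V | u ≠ t}).Connected)
    (hcon : ¬ ∃ x y : V, SepPair G x y ∧ ThreeConnPair G x y) :
    ∀ n : ℕ, ∀ a b : V, ∀ C : Set V, SepPair G a b → IsPart G a b C → C.ncard ≤ n →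
      SideProp G a b C := by
  intro n
  induction n with
  | zero =>
    intro a b C _ hP hcard
    have := (Set.ncard_pos (C.toFinite)).mpr hP.1
    omega
  | succ n ih =>
    intro a b C hsep hP hcard
    have hab : a ≠ b := hsep.1
    have hnadjab : ¬ G.Adj a b := fun h => hcon ⟨a, b, hsep, cheese h⟩
    have hne : ∃ v : V, v ≠ a ∧ v ≠ b := by
      obtain ⟨z, hz⟩ := hP.1
      exact ⟨z, hP.2.1 z hz⟩
    obtain ⟨x, y, hx, hy, hnxy⟩ := not_avd_of_sep hne hsep
    have hpx : IsPart G a b (cmp G a b x) := cmp_isPart hx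
    have hpy : IsPart G a b (cmp G a b y) := cmp_isPart hy
    obtain ⟨D, hD, hCD⟩ : ∃ D, IsPart G a b D ∧ Disjoint C D := by
      by_cases h1 : ∃ v, v ∈ cmp G a b x ∧ v ∈ C
      · obtain ⟨v, hv1, hv2⟩ := h1
        have hCx : cmp G a b x = C := part_eq hpx hP hv1 hv2
        refine ⟨cmp G a b y, hpy, Set.disjoint_left.mpr ?_⟩
        intro t htC hty
        have heq := part_eq hpy hpx hty (show t ∈ cmp G a b x from hCx ▸ htC)
        have hyy : y ∈ cmp G a b x := heq ▸ mem_cmp_self hy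
        exact hnxy hyy.2
      · refine ⟨cmp G a b x, hpx, Set.disjoint_left.mpr ?_⟩
        intro t htC htx
        exact h1 ⟨t, htx, htC⟩
    by_cases hcex : ∃ c ∈ C, ¬ Avd G ((C ∪ {a, b}) \ {c}) a b
    · -- Branch A: a separating vertex inside C
      obtain ⟨c, hcC, hnavd⟩ := hcex
      set S' : Set V := (C ∪ {a, b}) \ {c} with hS'def
      have hswap : ((C ∪ {b, a}) \ {c} : Set V) = S' := by rw [Set.pair_comm]
      have hnavd' : ¬ Avd G S' b a := fun h => hnavd h.symm
      obtain ⟨hNa, hXint, hcX⟩ := oneSide hnocut hcon ih hab hP hcC rfl hnavd hcard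
      obtain ⟨hNb, hYint, hcY⟩ :=
        oneSide hnocut hcon ih hab.symm hP.symmPair hcC hswap.symm hnavd' hcard
      set X' : Set V := reachSet G S' a \ {a} with hX'def
      set Y' : Set V := reachSet G S' b \ {b} with hY'def
      have hXY : ∀ t, t ∈ reachSet G S' a → t ∈ reachSet G S' b → False :=
        fun t h1 h2 => hnavd (h1.2.trans h2.2.symm)
      have hcov : ∀ v ∈ C, v ≠ c → v ∈ X' ∨ v ∈ Y' := by
        intro v hvC hvc
        have hva := (hP.2.1 v hvC).1
        have hvb := (hP.2.1 v hvC).2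
        have hvS : v ∈ (C ∪ {a, b} : Set V) \ {c} := ⟨Or.inl hvC, by simpa using hvc⟩
        rcases reachAorB hnocut hab hP hvS with h | h
        · exact Or.inl ⟨⟨hvS, h.symm⟩, by simp [hva]⟩
        · exact Or.inr ⟨⟨hvS, h.symm⟩, by simp [hvb]⟩
      have hdisjXY : ∀ t, t ∈ X' ∪ {a} → t ∈ Y' ∪ {b} → False := by
        intro t h1 h2
        rcases h1 with h1 | h1 <;> rcases h2 with h2 | h2
        · exact hXY t h1.1 h2.1
        · simp only [Set.mem_singleton_iff] at h2; subst h2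
          exact hnavd h1.1.2
        · simp only [Set.mem_singleton_iff] at h1; subst h1
          exact hnavd (Avd.symm h2.1.2)
        · simp only [Set.mem_singleton_iff] at h1 h2; exact hab (h1.symm.trans h2)
      refine ⟨?_, hNa, hNb⟩
      intro v hvC
      by_cases hvc : v = c
      · subst hvc
        obtain ⟨zX, hzXmem, hzX⟩ := hcX
        obtain ⟨zY, hzYmem, hzY⟩ := hcY
        refine ⟨zX, zY, fun h => hdisjXY zX hzXmem (h ▸ hzYmem), ?_⟩
        ext t
        constructor
        · intro ht
          have hadj : G.Adj v t := ht
          have hmem : t ∈ X' ∪ {a} ∨ t ∈ Y' ∪ {b} := by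
            by_cases htC : t ∈ C
            · have htc : t ≠ v := fun h => G.irrefl (h ▸ hadj)
              rcases hcov t htC htc with h | h
              · exact Or.inl (Or.inl h)
              · exact Or.inr (Or.inl h)
            · rcases hP.2.2.1 v hvC t hadj htC with h | h
              · exact Or.inl (Or.inr (by simp [h]))
              · exact Or.inr (Or.inr (by simp [h]))
          rcases hmem with h | h
          · have : t ∈ G.neighborSet v ∩ (X' ∪ {a}) := ⟨ht, h⟩
            rw [hzX] at this
            simp only [Set.mem_singleton_iff] at this
            simp [this]
          · have : t ∈ G.neighborSet v ∩ (Y' ∪ {b}) := ⟨ht, h⟩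
            rw [hzY] at this
            simp only [Set.mem_singleton_iff] at this
            simp [this]
        · intro ht
          simp only [Set.mem_insert_iff, Set.mem_singleton_iff] at ht
          rcases ht with rfl | rfl
          · have : t ∈ G.neighborSet v ∩ (X' ∪ {a}) := by rw [hzX]; simp
            exact this.1
          · have : t ∈ G.neighborSet v ∩ (Y' ∪ {b}) := by rw [hzY]; simp
            exact this.1
      · rcases hcov v hvC hvc with h | h
        · exact hXint v h
        · exact hYint v h
    · -- Branch B: no separating vertex inside C, so two disjoint paths through C
      exfalso
      push_neg at hcex
      obtain ⟨p0, hp0⟩ := partPath hnocut hab hP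
      have hp0S : ∀ v ∈ p0.1.support, v ∈ (C ∪ {a, b} : Set V) := by
        intro v hv
        rcases hp0 v hv with h | h | h
        · exact Or.inl h
        · exact Or.inr (by simp [h])
        · exact Or.inr (by simp [h])
      have hWS : ∀ c : V, ∀ x' ∈ (C ∪ {a, b} : Set V) \ {c},
          ∀ y' ∈ (C ∪ {a, b} : Set V) \ {c}, Avd G ((C ∪ {a, b}) \ {c}) x' y' := by
        intro c x' hx' y' hy'
        have hablink : a ∈ ((C ∪ {a, b} : Set V) \ {c}) → b ∈ ((C ∪ {a, b} : Set V) \ {c}) →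
            Avd G ((C ∪ {a, b}) \ {c}) a b := by
          intro ha' hb'
          by_cases hcC : c ∈ C
          · exact hcex c hcC
          · refine ⟨p0.1, fun v hv => ⟨hp0S v hv, ?_⟩⟩
            rcases hp0 v hv with h | h | h
            · simp only [Set.mem_singleton_iff]
              rintro rfl
              exact hcC h
            · subst h; exact ha'.2
            · subst h; exact hb'.2
        rcases reachAorB hnocut hab hP hx' with h1 | h1 <;>
          rcases reachAorB hnocut hab hP hy' with h2 | h2
        · exact h1.trans h2.symm
        · exact (h1.trans (hablink h1.right_mem h2.right_mem)).trans h2.symm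
        · exact (h1.trans (hablink h2.right_mem h1.right_mem).symm).trans h2.symm
        · exact Avd.trans h1 (Avd.symm h2)
      obtain ⟨P1, P2, hP1S, hP2S, hID12⟩ :=
        whitney hWS p0.1.length a b hab ⟨p0.1, hp0S, le_refl _⟩
      obtain ⟨p3, hp3⟩ := partPath hnocut hab hD
      have hIDside : ∀ (q : G.Path a b), (∀ v ∈ q.1.support, v ∈ (C ∪ {a, b} : Set V)) →
          InternallyDisjoint G q.1 p3.1 := by
        intro q hq v hv1 hv2
        rcases hp3 v hv2 with h | h | h
        · rcases hq v hv1 with h' | h'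
          · exact absurd h (Set.disjoint_left.mp hCD h')
          · simp at h'; tauto
        · exact Or.inl h
        · exact Or.inr h
      exact hcon ⟨a, b, hsep, P1, P2, p3, hID12, hIDside P1 hP1S, hIDside P2 hP2S⟩

end TCAux

open TCAux in
/-- A biconnected planar graph that is neither 3-connected (i.e., it has a separating
pair) nor a cycle (i.e., not 2-regular) has a 3-connected separating pair. -/
theorem exists_threeconn_sep_pair {V : Type*} [Fintype V] (G : SimpleGraph V)
    [DecidableRel G.Adj]
    (hbi : Biconnected G) (hpl : HasPlanarEmbedding G)
    (hnot3conn : ∃ a b : V, SepPair G a b)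
    (hnotcycle : ¬ ∀ v : V, G.degree v = 2) :
    ∃ a b : V, SepPair G a b ∧ ThreeConnPair G a b := by
  classical
  by_contra hcon
  obtain ⟨a, b, hsep⟩ := hnot3conn
  have hnocut := hbi.2.2
  have hab : a ≠ b := hsep.1
  have hnadjab : ¬ G.Adj a b := fun h => hcon ⟨a, b, hsep, cheese h⟩
  have hne : ∃ v : V, v ≠ a ∧ v ≠ b := by
    by_contra hno
    push_neg at hno
    have hsub : (Finset.univ : Finset V) ⊆ {a, b} := by
      intro v _
      by_cases hva : v = a
      · simp [hva]
      · simp [hno v hva]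
    have h2 : Fintype.card V ≤ 2 := by
      calc Fintype.card V = (Finset.univ : Finset V).card := rfl
        _ ≤ ({a, b} : Finset V).card := Finset.card_le_card hsub
        _ ≤ 2 := Finset.card_insert_le _ _ |>.trans (by simp)
    have h3 := hbi.2.1
    rw [Nat.card_eq_fintype_card] at h3
    omega
  obtain ⟨x, y, hx, hy, hnxy⟩ := not_avd_of_sep hne hsep
  set D1 : Set V := cmp G a b x with hD1def
  set D2 : Set V := cmp G a b y with hD2def
  have hp1 : IsPart G a b D1 := cmp_isPart hx
  have hp2 : IsPart G a b D2 := cmp_isPart hy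
  have hd12 : Disjoint D1 D2 := by
    rw [Set.disjoint_left]
    intro t ht1 ht2
    have heq := part_eq hp2 hp1 ht2 ht1
    have : y ∈ D1 := heq ▸ mem_cmp_self hy
    exact hnxy this.2
  have hcover : ∀ v : V, v ≠ a → v ≠ b → v ∈ D1 ∨ v ∈ D2 := by
    intro v hva hvb
    by_contra hno
    push_neg at hno
    have hp3 : IsPart G a b (cmp G a b v) := cmp_isPart ⟨hva, hvb⟩
    have hd13 : Disjoint D1 (cmp G a b v) := by
      rw [Set.disjoint_left]
      intro t ht1 ht3
      have heq := part_eq hp3 hp1 ht3 ht1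
      exact hno.1 (heq ▸ mem_cmp_self ⟨hva, hvb⟩)
    have hd23 : Disjoint D2 (cmp G a b v) := by
      rw [Set.disjoint_left]
      intro t ht2 ht3
      have heq := part_eq hp3 hp2 ht3 ht2
      exact hno.2 (heq ▸ mem_cmp_self ⟨hva, hvb⟩)
    exact hcon ⟨a, b, hsep, threeParts hnocut hab hp1 hp2 hp3 hd12 hd13 hd23⟩
  have hcon' : ¬ ∃ x y : V, SepPair G x y ∧ ThreeConnPair G x y := hcon
  have hSP1 : SideProp G a b D1 := mainLemma hnocut hcon' D1.ncard a b D1 hsep hp1 le_rfl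
  have hSP2 : SideProp G a b D2 := mainLemma hnocut hcon' D2.ncard a b D2 hsep hp2 le_rfl
  have hdeg2 : ∀ v u w : V, u ≠ w → G.neighborSet v = {u, w} → G.degree v = 2 := by
    intro v u w huw hset
    have hfin : G.neighborFinset v = {u, w} := by
      ext t
      rw [SimpleGraph.mem_neighborFinset]
      have := Set.ext_iff.mp hset t
      rw [SimpleGraph.mem_neighborSet] at this
      simpa using this
    show (G.neighborFinset v).card = 2
    rw [hfin]
    exact Finset.card_pair huw
  have hdega : G.degree a = 2 := by
    obtain ⟨u1, hu1, h1⟩ := hSP1.2.1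
    obtain ⟨u2, hu2, h2⟩ := hSP2.2.1
    have hu12 : u1 ≠ u2 := by
      rintro rfl
      exact Set.disjoint_left.mp hd12 hu1 hu2
    refine hdeg2 a u1 u2 hu12 ?_
    ext t
    constructor
    · intro ht
      have hadj : G.Adj a t := ht
      have hta : t ≠ a := fun h => G.irrefl (h ▸ hadj)
      have htb : t ≠ b := by rintro rfl; exact hnadjab hadj
      rcases hcover t hta htb with h | h
      · have : t ∈ G.neighborSet a ∩ D1 := ⟨ht, h⟩
        rw [h1] at this
        simp only [Set.mem_singleton_iff] at this
        exact Or.inl this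
      · have : t ∈ G.neighborSet a ∩ D2 := ⟨ht, h⟩
        rw [h2] at this
        simp only [Set.mem_singleton_iff] at this
        exact Or.inr this
    · intro ht
      simp only [Set.mem_insert_iff, Set.mem_singleton_iff] at ht
      rcases ht with rfl | rfl
      · have : t ∈ G.neighborSet a ∩ D1 := by rw [h1]; simp
        exact this.1
      · have : t ∈ G.neighborSet a ∩ D2 := by rw [h2]; simp
        exact this.1
  have hdegb : G.degree b = 2 := by
    obtain ⟨u1, hu1, h1⟩ := hSP1.2.2
    obtain ⟨u2, hu2, h2⟩ := hSP2.2.2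
    have hu12 : u1 ≠ u2 := by
      rintro rfl
      exact Set.disjoint_left.mp hd12 hu1 hu2
    refine hdeg2 b u1 u2 hu12 ?_
    ext t
    constructor
    · intro ht
      have hadj : G.Adj b t := ht
      have htb : t ≠ b := fun h => G.irrefl (h ▸ hadj)
      have hta : t ≠ a := by rintro rfl; exact hnadjab hadj.symm
      rcases hcover t hta htb with h | h
      · have : t ∈ G.neighborSet b ∩ D1 := ⟨ht, h⟩
        rw [h1] at this
        simp only [Set.mem_singleton_iff] at this
        exact Or.inl this
      · have : t ∈ G.neighborSet b ∩ D2 := ⟨ht, h⟩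
        rw [h2] at this
        simp only [Set.mem_singleton_iff] at this
        exact Or.inr this
    · intro ht
      simp only [Set.mem_insert_iff, Set.mem_singleton_iff] at ht
      rcases ht with rfl | rfl
      · have : t ∈ G.neighborSet b ∩ D1 := by rw [h1]; simp
        exact this.1
      · have : t ∈ G.neighborSet b ∩ D2 := by rw [h2]; simp
        exact this.1
  refine hnotcycle fun v => ?_
  by_cases hva : v = a
  · subst hva; exact hdega
  by_cases hvb : v = b
  · subst hvb; exact hdegb
  rcases hcover v hva hvb with h | h
  · obtain ⟨u, w, huw, hset⟩ := hSP1.1 v h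
    exact hdeg2 v u w huw hset
  · obtain ⟨u, w, huw, hset⟩ := hSP2.1 v h
    exact hdeg2 v u w huw hset
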